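/- If ln X is normally distributed with mean μ₀ and variance v² > 0, then E[(X − K)⁺] = e^{μ₀ + v²/2} Φ((μ₀ + v² − ln K)/v) − K Φ((μ₀ − ln K)/v) for any K > 0. -/

import Mathlib

open MeasureTheory Real ProbabilityTheory
open scoped NNReal ENNReal

lemma gauss_tail (v : ℝ) (hv : 0 < v) (m a : ℝ) :
    ∫ y in Set.Ioi a, gaussianPDFReal m (Real.toNNReal (v ^ 2)) y
      = (Real.sqrt (2 * π))⁻¹ * ∫ t in Set.Iic ((m - a) / v), Real.exp (-t ^ 2 / 2) := by
  have hv' : v ≠ 0 := hv.ne'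
  have hcoe : ((Real.toNNReal (v ^ 2)) : ℝ) = v ^ 2 :=
    Real.coe_toNNReal _ (sq_nonneg v)
  have hkey : ∀ y : ℝ, gaussianPDFReal m (Real.toNNReal (v ^ 2)) y
      = (Real.sqrt (2 * π))⁻¹ * v⁻¹ * Real.exp (-(v⁻¹ * (y - m)) ^ 2 / 2) := by
    intro y
    simp only [gaussianPDFReal, hcoe]
    rw [Real.sqrt_mul (by positivity : (0:ℝ) ≤ 2 * π), Real.sqrt_sq hv.le, mul_inv]
    congr 1
    rw [mul_pow, inv_pow]
    field_simp
  have hshift : ∫ y in Set.Ioi a, Real.exp (-(v⁻¹ * (y - m)) ^ 2 / 2)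
      = ∫ y in Set.Ioi (a - m), Real.exp (-(v⁻¹ * y) ^ 2 / 2) := by
    have hmp : MeasurePreserving (fun x : ℝ => x + m) volume volume :=
      measurePreserving_add_right volume m
    have hemb : MeasurableEmbedding (fun x : ℝ => x + m) :=
      (Homeomorph.addRight m).isClosedEmbedding.measurableEmbedding
    have h := hmp.setIntegral_preimage_emb hemb
      (fun y => Real.exp (-(v⁻¹ * (y - m)) ^ 2 / 2)) (Set.Ioi a)
    rw [Set.preimage_add_const_Ioi] at h
    rw [← h]
    congr 1
    ext x
    simp [add_sub_cancel_right]
  have hscale : ∫ y in Set.Ioi (a - m), Real.exp (-(v⁻¹ * y) ^ 2 / 2)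
      = v * ∫ t in Set.Ioi (v⁻¹ * (a - m)), Real.exp (-t ^ 2 / 2) := by
    have h := integral_comp_mul_left_Ioi (fun t => Real.exp (-t ^ 2 / 2)) (a - m)
      (inv_pos.mpr hv)
    simpa [smul_eq_mul, inv_inv] using h
  have hneg : ∫ t in Set.Ioi (v⁻¹ * (a - m)), Real.exp (-t ^ 2 / 2)
      = ∫ t in Set.Iic ((m - a) / v), Real.exp (-t ^ 2 / 2) := by
    have h := integral_comp_neg_Ioi (v⁻¹ * (a - m)) (fun t => Real.exp (-t ^ 2 / 2))
    simp only [neg_sq] at h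
    rw [h]
    have he : -(v⁻¹ * (a - m)) = (m - a) / v := by field_simp; ring
    rw [he]
  calc ∫ y in Set.Ioi a, gaussianPDFReal m (Real.toNNReal (v ^ 2)) y
      = ∫ y in Set.Ioi a, (Real.sqrt (2 * π))⁻¹ * v⁻¹
          * Real.exp (-(v⁻¹ * (y - m)) ^ 2 / 2) := by simp_rw [hkey]
    _ = (Real.sqrt (2 * π))⁻¹ * v⁻¹
          * ∫ y in Set.Ioi a, Real.exp (-(v⁻¹ * (y - m)) ^ 2 / 2) := by
        rw [integral_const_mul]
    _ = (Real.sqrt (2 * π))⁻¹ * v⁻¹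
          * (v * ∫ t in Set.Ioi (v⁻¹ * (a - m)), Real.exp (-t ^ 2 / 2)) := by
        rw [hshift, hscale]
    _ = (Real.sqrt (2 * π))⁻¹ * ∫ t in Set.Iic ((m - a) / v), Real.exp (-t ^ 2 / 2) := by
        rw [hneg]; field_simp

lemma gauss_tilt (v : ℝ) (hv : 0 < v) (m y : ℝ) :
    Real.exp y * gaussianPDFReal m (Real.toNNReal (v ^ 2)) y
      = Real.exp (m + v ^ 2 / 2) * gaussianPDFReal (m + v ^ 2) (Real.toNNReal (v ^ 2)) y := by
  have hv' : v ≠ 0 := hv.ne'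
  have hcoe : ((Real.toNNReal (v ^ 2)) : ℝ) = v ^ 2 :=
    Real.coe_toNNReal _ (sq_nonneg v)
  simp only [gaussianPDFReal, hcoe]
  rw [mul_left_comm, mul_left_comm (Real.exp (m + v ^ 2 / 2)), ← Real.exp_add, ← Real.exp_add]
  congr 2
  field_simp
  ring

/-- If ln X ~ N(μ₀, v²) with v > 0, then
E[(X − K)⁺] = e^{μ₀+v²/2}Φ((μ₀+v²−ln K)/v) − KΦ((μ₀−ln K)/v) for any K > 0. -/
theorem lognormal_call_expectation
    {Ω : Type*} [MeasureSpace Ω] [IsProbabilityMeasure (volume : Measure Ω)]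
    (Φ : ℝ → ℝ)
    (hΦ : ∀ x, Φ x = (Real.sqrt (2 * π))⁻¹ * ∫ t in Set.Iic x, Real.exp (-t ^ 2 / 2))
    (X : Ω → ℝ) (hXpos : ∀ ω, 0 < X ω)
    (μ₀ v K : ℝ) (hv : 0 < v) (hK : 0 < K)
    (hlaw : Measure.map (fun ω => Real.log (X ω)) volume =
      gaussianReal μ₀ (Real.toNNReal (v ^ 2))) :
    ∫ ω, max (X ω - K) 0 =
      Real.exp (μ₀ + v ^ 2 / 2) * Φ ((μ₀ + v ^ 2 - Real.log K) / v) -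
      K * Φ ((μ₀ - Real.log K) / v) := by
  set V : ℝ≥0 := Real.toNNReal (v ^ 2) with hVdef
  have hV0 : V ≠ 0 := by
    simp only [hVdef, ne_eq, Real.toNNReal_eq_zero, not_le]
    positivity
  set a : ℝ := Real.log K with hadef
  have hL : AEMeasurable (fun ω => Real.log (X ω)) (volume : Measure Ω) :=
    aemeasurable_of_map_neZero (by rw [hlaw]; infer_instance)
  -- Step 1: transfer to the Gaussian law on ℝ
  have h1 : ∫ ω, max (X ω - K) 0 = ∫ y, max (Real.exp y - K) 0 ∂(gaussianReal μ₀ V) := by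
    rw [← hlaw, integral_map hL (f := fun y => max (Real.exp y - K) 0)
      ((continuous_exp.sub continuous_const).max continuous_const).aestronglyMeasurable]
    refine integral_congr_ae (ae_of_all _ fun ω => ?_)
    simp [Real.exp_log (hXpos ω)]
  -- Step 2: write as a Lebesgue integral against the density
  have h2 : ∫ y, max (Real.exp y - K) 0 ∂(gaussianReal μ₀ V)
      = ∫ y, gaussianPDFReal μ₀ V y * max (Real.exp y - K) 0 := by
    rw [gaussianReal_of_var_ne_zero _ hV0, gaussianPDF_def]
    have heq : (fun x => ENNReal.ofReal (gaussianPDFReal μ₀ V x))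
        = fun x => (((fun x => (gaussianPDFReal μ₀ V x).toNNReal) x : ℝ≥0) : ℝ≥0∞) := rfl
    rw [heq, integral_withDensity_eq_integral_smul
      ((measurable_gaussianPDFReal μ₀ V).real_toNNReal)]
    refine integral_congr_ae (ae_of_all _ fun y => ?_)
    simp [NNReal.smul_def, Real.coe_toNNReal _ (gaussianPDFReal_nonneg μ₀ V y)]
  -- Step 3: rewrite with an indicator of (log K, ∞)
  have h3 : ∫ y, gaussianPDFReal μ₀ V y * max (Real.exp y - K) 0
      = ∫ y in Set.Ioi a, (Real.exp y - K) * gaussianPDFReal μ₀ V y := by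
    rw [← integral_indicator measurableSet_Ioi]
    refine integral_congr_ae (ae_of_all _ fun y => ?_)
    by_cases hy : y ∈ Set.Ioi a
    · have hyK : K ≤ Real.exp y := by
        have := Real.exp_lt_exp.mpr (Set.mem_Ioi.mp hy)
        rw [hadef, Real.exp_log hK] at this
        exact this.le
      simp only [Set.indicator_of_mem hy,
        max_eq_left (show (0:ℝ) ≤ Real.exp y - K by linarith)]
      ring
    · have hyK : Real.exp y ≤ K := by
        have hya : y ≤ a := not_lt.mp (by simpa [Set.mem_Ioi] using hy)
        calc Real.exp y ≤ Real.exp a := Real.exp_le_exp.mpr hya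
          _ = K := by rw [hadef, Real.exp_log hK]
      simp only [Set.indicator_of_notMem hy,
        max_eq_right (show Real.exp y - K ≤ (0:ℝ) by linarith), mul_zero]
  -- Integrability facts
  have htilt : (fun y => Real.exp y * gaussianPDFReal μ₀ V y)
      = fun y => Real.exp (μ₀ + v ^ 2 / 2) * gaussianPDFReal (μ₀ + v ^ 2) V y :=
    funext fun y => gauss_tilt v hv μ₀ y
  have hint1 : IntegrableOn (fun y => Real.exp y * gaussianPDFReal μ₀ V y) (Set.Ioi a) := by
    rw [htilt]
    exact ((integrable_gaussianPDFReal (μ₀ + v ^ 2) V).const_mul _).integrableOn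
  have hint2 : IntegrableOn (fun y => K * gaussianPDFReal μ₀ V y) (Set.Ioi a) :=
    ((integrable_gaussianPDFReal μ₀ V).const_mul K).integrableOn
  -- Step 4: split the integral
  have h4 : ∫ y in Set.Ioi a, (Real.exp y - K) * gaussianPDFReal μ₀ V y
      = (∫ y in Set.Ioi a, Real.exp y * gaussianPDFReal μ₀ V y)
        - K * ∫ y in Set.Ioi a, gaussianPDFReal μ₀ V y := by
    have heq : ∀ y, (Real.exp y - K) * gaussianPDFReal μ₀ V y
        = Real.exp y * gaussianPDFReal μ₀ V y - K * gaussianPDFReal μ₀ V y :=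
      fun y => by ring
    simp_rw [heq]
    rw [integral_sub hint1 hint2, integral_const_mul]
  -- Step 5: compute the two tail integrals
  have h5 : ∫ y in Set.Ioi a, Real.exp y * gaussianPDFReal μ₀ V y
      = Real.exp (μ₀ + v ^ 2 / 2) * Φ ((μ₀ + v ^ 2 - a) / v) := by
    rw [htilt, integral_const_mul, hVdef, gauss_tail v hv (μ₀ + v ^ 2) a, ← hΦ]
  have h6 : ∫ y in Set.Ioi a, gaussianPDFReal μ₀ V y = Φ ((μ₀ - a) / v) := by
    rw [hVdef, gauss_tail v hv μ₀ a, ← hΦ]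
  rw [h1, h2, h3, h4, h5, h6]
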